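/- Fix k ≥ 2, β > 0, q ∈ ℝ, σ₁ ∈ {-1,1}^k, and define p_σ = e^{q(σ·σ₁)²}/H(q) with H(q) = ∑_σ e^{q(σ·σ₁)²}. Then (p_σ) satisfies the Lagrange stationarity system log p_{σ₀} = (β²/2) ∑_σ p_σ (σ·σ₀)² + λ − 1 for all σ₀ ∈ {-1,1}^k (for some λ ∈ ℝ) if and only if q = (β²/(2k(k−1)))(H'(q)/H(q) − k). -/

import Mathlib

open Finset Real

/-- The real sign of a Boolean spin: `true ↦ 1`, `false ↦ -1`. -/
noncomputable def sgn (b : Bool) : ℝ := if b then 1 else -1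

/-- Standard inner product of two spin vectors in `{-1,1}^k`. -/
noncomputable def sdot {k : ℕ} (σ τ : Fin k → Bool) : ℝ := ∑ i, sgn (σ i) * sgn (τ i)

lemma sgn_mul_self (b : Bool) : sgn b * sgn b = 1 := by cases b <;> norm_num [sgn]

lemma sgn_beq (a b : Bool) : sgn (a == b) = sgn a * sgn b := by
  cases a <;> cases b <;> norm_num [sgn]

def gg {k : ℕ} (σ₁ : Fin k → Bool) : (Fin k → Bool) ≃ (Fin k → Bool) where
  toFun σ := fun i => σ i == σ₁ i
  invFun σ := fun i => σ i == σ₁ i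
  left_inv σ := by
    funext i; show ((σ i == σ₁ i) == σ₁ i) = σ i
    cases σ i <;> cases σ₁ i <;> rfl
  right_inv σ := by
    funext i; show ((σ i == σ₁ i) == σ₁ i) = σ i
    cases σ i <;> cases σ₁ i <;> rfl

lemma gg_apply {k : ℕ} (σ₁ τ : Fin k → Bool) (i : Fin k) :
    gg σ₁ τ i = (τ i == σ₁ i) := rfl

lemma gg_sdot {k : ℕ} (σ₁ σ₀ τ : Fin k → Bool) :
    sdot (gg σ₁ τ) σ₀ = ∑ m, (sgn (σ₀ m) * sgn (σ₁ m)) * sgn (τ m) := by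
  unfold sdot
  refine Finset.sum_congr rfl fun i _ => ?_
  rw [gg_apply, sgn_beq]; ring

lemma gg_sdot_self {k : ℕ} (σ₁ τ : Fin k → Bool) :
    sdot (gg σ₁ τ) σ₁ = ∑ m, sgn (τ m) := by
  rw [gg_sdot]
  refine Finset.sum_congr rfl fun i _ => ?_
  rw [sgn_mul_self, one_mul]

lemma perm_sym {k : ℕ} (q : ℝ) (i j i' j' : Fin k) (hij : i ≠ j) (h' : i' ≠ j') :
    ∑ τ : Fin k → Bool, Real.exp (q * (∑ m, sgn (τ m)) ^ 2) * (sgn (τ i) * sgn (τ j)) =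
    ∑ τ : Fin k → Bool, Real.exp (q * (∑ m, sgn (τ m)) ^ 2) * (sgn (τ i') * sgn (τ j')) := by
  classical
  have hπ₀ : (Equiv.swap i i') i' = i := Equiv.swap_apply_right i i'
  have hne : (Equiv.swap i i') j' ≠ i := fun h =>
    h' ((Equiv.swap i i').injective (h.trans hπ₀.symm)).symm
  set pp : Equiv.Perm (Fin k) :=
    (Equiv.swap i i').trans (Equiv.swap ((Equiv.swap i i') j') j) with hπdef
  have hπi : pp i' = i := by
    simp only [hπdef, Equiv.trans_apply, hπ₀]
    exact Equiv.swap_apply_of_ne_of_ne (Ne.symm hne) hij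
  have hπj : pp j' = j := by
    simp only [hπdef, Equiv.trans_apply]
    exact Equiv.swap_apply_left _ _
  rw [← Equiv.sum_comp (Equiv.arrowCongr pp.symm (Equiv.refl Bool))
        (fun τ => Real.exp (q * (∑ m, sgn (τ m)) ^ 2) * (sgn (τ i') * sgn (τ j')))]
  refine Finset.sum_congr rfl fun τ _ => ?_
  have happ : ∀ m, (Equiv.arrowCongr pp.symm (Equiv.refl Bool) τ) m = τ (pp m) := by
    intro m
    simp [Equiv.arrowCongr_apply, Function.comp, Equiv.symm_symm]
  have hS : (∑ m, sgn ((Equiv.arrowCongr pp.symm (Equiv.refl Bool) τ) m)) = ∑ m, sgn (τ m) := by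
    simp only [happ]
    exact Equiv.sum_comp pp (fun m => sgn (τ m))
  rw [hS, happ, happ, hπi, hπj]

lemma key {k : ℕ} (q : ℝ) (σ₁ : Fin k → Bool) (i0 j0 : Fin k) (h0 : i0 ≠ j0) (σ₀ : Fin k → Bool) :
    ∑ σ : Fin k → Bool, Real.exp (q * (sdot σ σ₁) ^ 2) * (sdot σ σ₀) ^ 2 =
      (k : ℝ) * (∑ σ : Fin k → Bool, Real.exp (q * (sdot σ σ₁) ^ 2)) +
      (∑ τ : Fin k → Bool, Real.exp (q * (∑ m, sgn (τ m)) ^ 2) * (sgn (τ i0) * sgn (τ j0))) *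
        ((sdot σ₀ σ₁) ^ 2 - (k : ℝ)) := by
  classical
  set ε : Fin k → ℝ := fun i => sgn (σ₀ i) * sgn (σ₁ i) with hε
  set D : ℝ := ∑ τ : Fin k → Bool,
      Real.exp (q * (∑ m, sgn (τ m)) ^ 2) * (sgn (τ i0) * sgn (τ j0)) with hD
  set H₀ : ℝ := ∑ τ : Fin k → Bool, Real.exp (q * (∑ m, sgn (τ m)) ^ 2) with hH₀
  have hεsq : ∀ i, ε i * ε i = 1 := by
    intro i
    rw [hε]
    show (sgn (σ₀ i) * sgn (σ₁ i)) * (sgn (σ₀ i) * sgn (σ₁ i)) = 1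
    rw [mul_mul_mul_comm, sgn_mul_self, sgn_mul_self, mul_one]
  have hHgauge : (∑ σ : Fin k → Bool, Real.exp (q * (sdot σ σ₁) ^ 2)) = H₀ := by
    rw [hH₀, ← Equiv.sum_comp (gg σ₁) (fun σ => Real.exp (q * (sdot σ σ₁) ^ 2))]
    exact Finset.sum_congr rfl fun τ _ => by rw [gg_sdot_self]
  have hεsum : (∑ i, ε i) = sdot σ₀ σ₁ := rfl
  have h1 : ∑ σ : Fin k → Bool, Real.exp (q * (sdot σ σ₁) ^ 2) * (sdot σ σ₀) ^ 2
      = ∑ τ : Fin k → Bool,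
          Real.exp (q * (∑ m, sgn (τ m)) ^ 2) * (∑ i, ε i * sgn (τ i)) ^ 2 := by
    rw [← Equiv.sum_comp (gg σ₁) (fun σ => Real.exp (q * (sdot σ σ₁) ^ 2) * (sdot σ σ₀) ^ 2)]
    exact Finset.sum_congr rfl fun τ _ => by rw [gg_sdot_self, gg_sdot]
  rw [h1, hHgauge]
  have h2 : ∀ τ : Fin k → Bool,
      Real.exp (q * (∑ m, sgn (τ m)) ^ 2) * (∑ i, ε i * sgn (τ i)) ^ 2
      = ∑ i, ∑ j, Real.exp (q * (∑ m, sgn (τ m)) ^ 2)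
          * ((ε i * sgn (τ i)) * (ε j * sgn (τ j))) := by
    intro τ
    have hsq : (∑ i, ε i * sgn (τ i)) ^ 2
        = ∑ i, ∑ j, (ε i * sgn (τ i)) * (ε j * sgn (τ j)) := by
      rw [sq, Finset.sum_mul_sum]
    rw [hsq, Finset.mul_sum]
    exact Finset.sum_congr rfl fun i _ => Finset.mul_sum _ _ _
  rw [Finset.sum_congr rfl fun τ _ => h2 τ, Finset.sum_comm]
  have h2' : (∑ i, ∑ τ : Fin k → Bool, ∑ j, Real.exp (q * (∑ m, sgn (τ m)) ^ 2)
          * ((ε i * sgn (τ i)) * (ε j * sgn (τ j))))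
      = ∑ i, ∑ j, ∑ τ : Fin k → Bool, Real.exp (q * (∑ m, sgn (τ m)) ^ 2)
          * ((ε i * sgn (τ i)) * (ε j * sgn (τ j))) :=
    Finset.sum_congr rfl fun i _ => Finset.sum_comm
  rw [h2']
  have h3 : ∀ i j : Fin k,
      (∑ τ : Fin k → Bool, Real.exp (q * (∑ m, sgn (τ m)) ^ 2)
          * ((ε i * sgn (τ i)) * (ε j * sgn (τ j))))
      = ε i * ε j * D + (if i = j then H₀ - D else 0) := by
    intro i j
    by_cases hij : i = j
    · subst hij
      have hterm : ∀ τ : Fin k → Bool,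
          Real.exp (q * (∑ m, sgn (τ m)) ^ 2) * ((ε i * sgn (τ i)) * (ε i * sgn (τ i)))
          = Real.exp (q * (∑ m, sgn (τ m)) ^ 2) := by
        intro τ
        rw [mul_mul_mul_comm, hεsq, sgn_mul_self, mul_one, mul_one]
      rw [Finset.sum_congr rfl fun τ _ => hterm τ, hεsq, if_pos rfl, ← hH₀]
      ring
    · simp only [if_neg hij, add_zero]
      have hterm : ∀ τ : Fin k → Bool,
          Real.exp (q * (∑ m, sgn (τ m)) ^ 2) * ((ε i * sgn (τ i)) * (ε j * sgn (τ j)))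
          = ε i * ε j * (Real.exp (q * (∑ m, sgn (τ m)) ^ 2) * (sgn (τ i) * sgn (τ j))) := by
        intro τ; ring
      rw [Finset.sum_congr rfl fun τ _ => hterm τ, ← Finset.mul_sum]
      congr 1
      rw [hD]
      exact perm_sym q i j i0 j0 hij h0
  rw [Finset.sum_congr rfl fun i _ => Finset.sum_congr rfl fun j _ => h3 i j]
  have h4 : (∑ i : Fin k, ∑ j : Fin k, (ε i * ε j * D + (if i = j then H₀ - D else 0)))
      = (sdot σ₀ σ₁) ^ 2 * D + (k : ℝ) * (H₀ - D) := by
    rw [Finset.sum_congr rfl fun i (_ : i ∈ Finset.univ) => Finset.sum_add_distrib,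
        Finset.sum_add_distrib]
    congr 1
    · have : (∑ i : Fin k, ∑ j : Fin k, ε i * ε j * D)
          = (∑ i : Fin k, ∑ j : Fin k, ε i * ε j) * D := by
        simp only [Finset.sum_mul]
      rw [this, ← Finset.sum_mul_sum, hεsum, ← sq]
    · simp [Finset.sum_ite_eq, Finset.card_univ]; ring
  rw [h4]
  ring

theorem stmt19 (k : ℕ) (hk : 2 ≤ k) (β : ℝ) (hβ : 0 < β) (q : ℝ)
    (σ₁ : Fin k → Bool)
    (H H' : ℝ → ℝ)
    (hH : ∀ q, H q = ∑ σ : Fin k → Bool, Real.exp (q * (sdot σ σ₁) ^ 2))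
    (hH' : ∀ q, H' q = ∑ σ : Fin k → Bool, (sdot σ σ₁) ^ 2 * Real.exp (q * (sdot σ σ₁) ^ 2))
    (p : (Fin k → Bool) → ℝ) (hp : ∀ σ, p σ = Real.exp (q * (sdot σ σ₁) ^ 2) / H q) :
    (∃ lam : ℝ, ∀ σ₀ : Fin k → Bool,
        Real.log (p σ₀) = β ^ 2 / 2 * (∑ σ : Fin k → Bool, p σ * (sdot σ σ₀) ^ 2) + lam - 1) ↔
      q = β ^ 2 / (2 * k * (k - 1)) * (H' q / H q - k) := by
  classical
  have hk0 : (2:ℝ) ≤ (k:ℝ) := by exact_mod_cast hk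
  have hi0 : 0 < k := by omega
  have hj0 : 1 < k := by omega
  set i0 : Fin k := ⟨0, hi0⟩ with hi0def
  set j0 : Fin k := ⟨1, hj0⟩ with hj0def
  have h0 : i0 ≠ j0 := by
    simp [hi0def, hj0def, Fin.ext_iff]
  set D : ℝ := ∑ τ : Fin k → Bool,
      Real.exp (q * (∑ m, sgn (τ m)) ^ 2) * (sgn (τ i0) * sgn (τ j0)) with hDdef
  have hHpos : 0 < H q := by
    rw [hH]
    exact Finset.sum_pos (fun σ _ => Real.exp_pos _) Finset.univ_nonempty
  have hHne : H q ≠ 0 := ne_of_gt hHpos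
  have hs1 : sdot σ₁ σ₁ = (k:ℝ) := by
    unfold sdot
    rw [Finset.sum_congr rfl fun i _ => sgn_mul_self (σ₁ i)]
    simp
  have hkey : ∀ σ₀ : Fin k → Bool,
      (∑ σ : Fin k → Bool, Real.exp (q * (sdot σ σ₁) ^ 2) * (sdot σ σ₀) ^ 2)
      = (k:ℝ) * H q + D * ((sdot σ₀ σ₁) ^ 2 - (k:ℝ)) := by
    intro σ₀
    rw [hH]
    exact key q σ₁ i0 j0 h0 σ₀
  have hH'eq : H' q = (k:ℝ) * H q + D * ((k:ℝ) ^ 2 - (k:ℝ)) := by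
    have h := hkey σ₁
    rw [hs1] at h
    rw [hH', Finset.sum_congr rfl fun σ (_ : σ ∈ Finset.univ) =>
      mul_comm ((sdot σ σ₁) ^ 2) (Real.exp (q * (sdot σ σ₁) ^ 2)), h]
  have hlog : ∀ σ₀ : Fin k → Bool,
      Real.log (p σ₀) = q * (sdot σ₀ σ₁) ^ 2 - Real.log (H q) := by
    intro σ₀
    rw [hp, Real.log_div (Real.exp_ne_zero _) hHne, Real.log_exp]
  have hsum : ∀ σ₀ : Fin k → Bool,
      (∑ σ : Fin k → Bool, p σ * (sdot σ σ₀) ^ 2)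
      = (k:ℝ) + D / H q * ((sdot σ₀ σ₁) ^ 2 - (k:ℝ)) := by
    intro σ₀
    have h : ∀ σ : Fin k → Bool, p σ * (sdot σ σ₀) ^ 2
        = Real.exp (q * (sdot σ σ₁) ^ 2) * (sdot σ σ₀) ^ 2 / H q := by
      intro σ; rw [hp]; ring
    rw [Finset.sum_congr rfl fun σ _ => h σ, ← Finset.sum_div, hkey σ₀]
    field_simp
  have hc : β ^ 2 / 2 * (D / H q) = β ^ 2 / (2 * k * (k - 1)) * (H' q / H q - k) := by
    have hk1 : (k:ℝ) - 1 ≠ 0 := by nlinarith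
    have hkne : (k:ℝ) ≠ 0 := by nlinarith
    rw [hH'eq]
    field_simp
    ring
  -- the flipped configuration
  set σf : Fin k → Bool := fun i => if i = i0 then !(σ₁ i) else σ₁ i with hσf
  have hs2 : sdot σf σ₁ = (k:ℝ) - 2 := by
    have h : ∀ i : Fin k, sgn (σf i) * sgn (σ₁ i) = (if i = i0 then (-2:ℝ) else 0) + 1 := by
      intro i
      by_cases hii : i = i0
      · rw [hσf]
        simp only [if_pos hii]
        cases σ₁ i <;> norm_num [sgn]
      · rw [hσf]
        simp only [if_neg hii]
        rw [sgn_mul_self]; norm_num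
    unfold sdot
    rw [Finset.sum_congr rfl fun i _ => h i, Finset.sum_add_distrib,
        Finset.sum_ite_eq' Finset.univ i0 (fun _ => (-2:ℝ))]
    simp
    linarith
  constructor
  · rintro ⟨lam, hl⟩
    have h1 := hl σ₁
    have h2 := hl σf
    rw [hlog, hsum, hs1] at h1
    rw [hlog, hsum, hs2] at h2
    have hcancel : (4 * (k:ℝ) - 4) ≠ 0 := by nlinarith
    have hq : q * (4 * (k:ℝ) - 4) = (β ^ 2 / 2 * (D / H q)) * (4 * (k:ℝ) - 4) := by
      linear_combination h1 - h2
    have hq' : q = β ^ 2 / 2 * (D / H q) := mul_right_cancel₀ hcancel hq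
    rw [← hc]
    exact hq'
  · intro hq
    have hq' : q = β ^ 2 / 2 * (D / H q) := hq.trans hc.symm
    refine ⟨1 - Real.log (H q) - β ^ 2 / 2 * (k:ℝ) + (β ^ 2 / 2 * (D / H q)) * (k:ℝ),
      fun σ₀ => ?_⟩
    rw [hlog, hsum]
    linear_combination ((sdot σ₀ σ₁) ^ 2) * hq'
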